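/- Let p be a prime element of ℤ[i]. There exist Gaussian integers x, y, z with x and y coprime (IsCoprime x y) such that x² + i·y² = p·z if and only if N(p) ≡ 1 (mod 8) or p is associated to 1 + i. -/

import Mathlib

set_option synthInstance.maxHeartbeats 1000000
set_option maxHeartbeats 1000000
open Zsqrtd

noncomputable def gaussBasis : Module.Basis (Fin 2) ℤ GaussianInt :=
  Module.Basis.ofEquivFun
  { toFun := fun z => ![z.re, z.im]
    invFun := fun f => ⟨f 0, f 1⟩
    map_add' := by intro a b; funext j; fin_cases j <;> simp
    map_smul' := by
      intro n a; funext j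
      fin_cases j <;> simp [zsmul_eq_mul, Zsqrtd.re_intCast, Zsqrtd.im_intCast]
    left_inv := by intro z; simp
    right_inv := by intro f; funext j; fin_cases j <;> simp }

theorem algNorm_eq (z : GaussianInt) : Algebra.norm ℤ z = z.norm := by
  rw [Algebra.norm_eq_matrix_det gaussBasis, Matrix.det_fin_two]
  simp only [Algebra.leftMulMatrix_eq_repr_mul, Module.Basis.ofEquivFun_repr_apply, Module.Basis.coe_ofEquivFun,
    gaussBasis]
  simp [Zsqrtd.norm_def, Zsqrtd.re_mul, Zsqrtd.im_mul, Function.update]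

instance : Module.Free ℤ GaussianInt := Module.Free.of_basis gaussBasis
instance : Module.Finite ℤ GaussianInt := Module.Finite.of_basis gaussBasis

theorem card_quot (p : GaussianInt) :
    Nat.card (GaussianInt ⧸ Ideal.span {p}) = p.norm.natAbs := by
  rw [← Submodule.cardQuot_apply, ← Ideal.absNorm_apply, Ideal.absNorm_span_singleton,
    algNorm_eq]

section FF
variable {K : Type*} [Field K] [Fintype K] (ι : K) (hι2 : ι ^ 2 = -1) (h2 : (2 : K) ≠ 0)
include hι2 h2

omit [Fintype K] hι2 in
theorem ffchar : ringChar K ≠ 2 := by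
  intro h
  apply h2
  have := ringChar.Nat.cast_ringChar (R := K)
  rw [h] at this
  exact_mod_cast this

omit [Fintype K] in
theorem fforder : orderOf (-ι) = 4 := by
  have hm1 : (-1 : K) ≠ 1 := by intro h; apply h2; linear_combination -h
  have h4 : (-ι) ^ 4 = 1 := by
    have : (-ι) ^ 4 = (ι ^ 2) ^ 2 := by ring
    rw [this, hι2]; ring
  have h2' : (-ι) ^ 2 ≠ 1 := by
    have : (-ι) ^ 2 = ι ^ 2 := by ring
    rw [this, hι2]; exact hm1
  have := orderOf_eq_prime_pow (p := 2) (n := 1) (x := -ι)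
    (by rw [pow_one]; exact h2') (by rw [show 1+1 = 2 from rfl]; exact_mod_cast h4)
  simpa using this

theorem ffsquare : IsSquare (-ι) ↔ 8 ∣ (Fintype.card K - 1) := by
  have hne : (-ι) ≠ 0 := by
    intro h
    have hi0 : ι = 0 := by linear_combination -h
    rw [hi0] at hι2
    apply h2
    linear_combination 2 * hι2
  have hodd : Fintype.card K % 2 = 1 :=
    FiniteField.odd_card_of_char_ne_two (ffchar h2)
  rw [FiniteField.isSquare_iff (ffchar h2) hne,
    ← orderOf_dvd_iff_pow_eq_one, fforder ι hι2 h2]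
  omega

theorem ffkey1 (h : ∃ a b : K, b ≠ 0 ∧ a ^ 2 + ι * b ^ 2 = 0) :
    8 ∣ (Fintype.card K - 1) := by
  obtain ⟨a, b, hb, hab⟩ := h
  rw [← ffsquare ι hι2 h2]
  refine ⟨a / b, ?_⟩
  field_simp
  linear_combination -hab

theorem ffkey2 (h : 8 ∣ (Fintype.card K - 1)) : ∃ a : K, a ^ 2 + ι = 0 := by
  obtain ⟨v, hv⟩ := (ffsquare ι hι2 h2).mpr h
  exact ⟨v, by rw [sq, ← hv]; ring⟩

end FF

theorem key (p : GaussianInt) (hp : Prime p) (hp2 : ¬ p ∣ 2) :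
    (∃ x y z : GaussianInt, IsCoprime x y ∧
        x ^ 2 + (⟨0, 1⟩ : GaussianInt) * y ^ 2 = p * z) ↔ p.norm ≡ 1 [ZMOD 8] := by
  have hbot : Ideal.span {p} ≠ (⊥ : Ideal GaussianInt) := by
    simp [Ideal.span_singleton_eq_bot, hp.ne_zero]
  have hdvd : ∀ w : GaussianInt, Ideal.Quotient.mk (Ideal.span {p}) w = 0 ↔ p ∣ w := by
    intro w
    rw [Ideal.Quotient.eq_zero_iff_dvd]
  have h2 : (2 : GaussianInt ⧸ Ideal.span {p}) ≠ 0 := by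
    intro h
    exact hp2 ((hdvd 2).mp (by rw [map_ofNat]; exact h))
  have hι2 : (Ideal.Quotient.mk (Ideal.span {p}) ⟨0, 1⟩) ^ 2 = -1 := by
    rw [← map_pow, show ((⟨0,1⟩ : GaussianInt) ^ 2) = -1 by
      ext <;> simp [pow_two, Zsqrtd.re_mul, Zsqrtd.im_mul]]
    simp
  haveI : (Ideal.span {p}).IsMaximal :=
    PrincipalIdealRing.isMaximal_of_irreducible hp.irreducible
  letI instF : Field (GaussianInt ⧸ Ideal.span {p}) := Ideal.Quotient.field _
  letI instFin : Fintype (GaussianInt ⧸ Ideal.span {p}) :=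
    @Fintype.ofFinite _ (Ideal.finiteQuotientOfFreeOfNeBot _ hbot)
  have hcard : Fintype.card (GaussianInt ⧸ Ideal.span {p}) = p.norm.natAbs := by
    rw [← Nat.card_eq_fintype_card, card_quot]
  have hpos : 0 < Fintype.card (GaussianInt ⧸ Ideal.span {p}) := Fintype.card_pos
  have hnn : 0 ≤ p.norm := Zsqrtd.norm_nonneg (by norm_num) p
  have hnormcast : p.norm = (Fintype.card (GaussianInt ⧸ Ideal.span {p}) : ℤ) := by
    rw [hcard, Int.natAbs_of_nonneg hnn]
  have hiff : p.norm ≡ 1 [ZMOD 8] ↔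
      8 ∣ (Fintype.card (GaussianInt ⧸ Ideal.span {p}) - 1) := by
    rw [Int.modEq_iff_dvd, hnormcast, dvd_sub_comm,
      show ((Fintype.card (GaussianInt ⧸ Ideal.span {p}) : ℤ) - 1 =
        ((Fintype.card (GaussianInt ⧸ Ideal.span {p}) - 1 : ℕ) : ℤ)) by
        push_cast [Nat.cast_sub hpos]; ring,
      show ((8:ℤ) = ((8:ℕ):ℤ)) by norm_num, Int.natCast_dvd_natCast]
  rw [hiff]
  constructor
  · rintro ⟨x, y, z, hxy, heq⟩
    have h := congrArg (Ideal.Quotient.mk (Ideal.span {p})) heq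
    simp only [map_add, map_mul, map_pow] at h
    rw [(hdvd p).mpr dvd_rfl, zero_mul] at h
    have hy : (Ideal.Quotient.mk (Ideal.span {p}) y) ≠ 0 := by
      intro h'
      have hpy := (hdvd y).mp h'
      rw [h'] at h
      have hx2 : (Ideal.Quotient.mk (Ideal.span {p}) x) ^ 2 = 0 := by
        linear_combination h
      have hpx : p ∣ x := hp.dvd_of_dvd_pow (n := 2)
        ((hdvd (x ^ 2)).mp (by rw [map_pow]; exact hx2))
      exact hp.not_unit (hxy.isUnit_of_dvd' hpx hpy)
    exact ffkey1 _ hι2 h2 ⟨_, _, hy, h⟩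
  · intro h
    obtain ⟨a, ha⟩ := ffkey2 _ hι2 h2 h
    obtain ⟨x, hx⟩ := Ideal.Quotient.mk_surjective a
    obtain ⟨z, hz⟩ : p ∣ x ^ 2 + ⟨0, 1⟩ := by
      rw [← hdvd, map_add, map_pow, hx]
      exact ha
    exact ⟨x, 1, z, isCoprime_one_right, by rw [one_pow, mul_one, hz]⟩

theorem prime_one_one : Prime (⟨1, 1⟩ : GaussianInt) := by
  rw [← UniqueFactorizationMonoid.irreducible_iff_prime]
  constructor
  · rw [← Zsqrtd.norm_eq_one_iff]
    decide
  · intro a b hab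
    have hn : a.norm.natAbs * b.norm.natAbs = 2 := by
      have h := congrArg (fun w : GaussianInt => w.norm.natAbs) hab
      simp only [Zsqrtd.norm_mul, Int.natAbs_mul] at h
      rw [← h]
      decide
    have : a.norm.natAbs = 1 ∨ b.norm.natAbs = 1 := by
      rcases Nat.prime_two.eq_one_or_self_of_dvd a.norm.natAbs ⟨_, hn.symm⟩ with h | h
      · exact Or.inl h
      · rw [h] at hn; omega
    rcases this with h | h
    · exact Or.inl (Zsqrtd.norm_eq_one_iff.mp h)
    · exact Or.inr (Zsqrtd.norm_eq_one_iff.mp h)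

theorem two_eq : (2 : GaussianInt) = -⟨0,1⟩ * (⟨1,1⟩ * ⟨1,1⟩) := by
  ext <;> simp [Zsqrtd.re_mul, Zsqrtd.im_mul]

/-- For a Gaussian prime `p`, the equation `x² + i·y² = p·z` with `x, y` coprime
is solvable iff `N(p) ≡ 1 (mod 8)` or `p` is associated to `1 + i`. -/
theorem stmt_2 (p : GaussianInt) (hp : Prime p) :
    (∃ x y z : GaussianInt, IsCoprime x y ∧
        x ^ 2 + (⟨0, 1⟩ : GaussianInt) * y ^ 2 = p * z) ↔
      (p.norm ≡ 1 [ZMOD 8] ∨ Associated p ⟨1, 1⟩) := by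
  by_cases hd2 : p ∣ 2
  · have hdiv : p ∣ (⟨1,1⟩ : GaussianInt) := by
      rw [two_eq] at hd2
      rcases hp.dvd_mul.mp hd2 with h | h
      · exact absurd (isUnit_of_dvd_unit h (Zsqrtd.norm_eq_one_iff.mp (by decide)))
          hp.not_unit
      · rcases hp.dvd_mul.mp h with h' | h' <;> exact h'
    have hass : Associated p ⟨1,1⟩ :=
      hp.irreducible.associated_of_dvd prime_one_one.irreducible hdiv
    constructor
    · intro _; exact Or.inr hass
    · intro _
      obtain ⟨u, hu⟩ := hass
      refine ⟨1, 1, u, isCoprime_one_left, ?_⟩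
      rw [hu]
      ext <;> simp [Zsqrtd.re_mul, Zsqrtd.im_mul]
  · rw [key p hp hd2]
    constructor
    · exact Or.inl
    · rintro (h | h)
      · exact h
      · exact absurd (h.dvd.trans (by
          rw [two_eq]; exact Dvd.dvd.mul_left (dvd_mul_right _ _) _)) hd2
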